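/- Let U be a unitary on a finite-dimensional Hilbert space and J an operator, and let Q₁,…,Q_k be mutually orthogonal nonzero operators each satisfying U†QᵢU = Qᵢ. Then the time-averaged autocorrelation satisfies lim_{t→∞} (1/t) Σ_{τ=1}^{t} ⟨J, U^{−τ} J U^{τ}⟩ ≥ Σᵢ |⟨J,Qᵢ⟩|²/⟨Qᵢ,Qᵢ⟩, where ⟨A,B⟩ = tr(A†B)/d and the limit exists. -/

import Mathlib

open Matrix Filter

/-- Hilbert–Schmidt inner product `⟨A,B⟩ = tr(A†B)/d`. -/
noncomputable def hsInner (d : ℕ) (A B : Matrix (Fin d) (Fin d) ℂ) : ℂ :=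
  Matrix.trace (Aᴴ * B) / d

local notation "⟪" x ", " y "⟫" => @inner ℂ _ _ x y

lemma mazur_abstract {E : Type*} [NormedAddCommGroup E] [InnerProductSpace ℂ E]
    [FiniteDimensional ℂ E] (Φ : E ≃ₗᵢ[ℂ] E) (v : E) {k : ℕ} (q : Fin k → E)
    (hfix : ∀ i, Φ (q i) = q i) (hnz : ∀ i, q i ≠ 0)
    (horth : ∀ i j, i ≠ j → ⟪q i, q j⟫ = 0) :
    ∃ L : ℝ,
      Tendsto (fun t : ℕ => (1 / (t : ℝ)) * ∑ τ ∈ Finset.Icc 1 t,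
          (⟪v, ((Φ.toLinearEquiv : E →ₗ[ℂ] E) ^ τ) v⟫).re) atTop (nhds L)
      ∧ ∑ i, ‖⟪v, q i⟫‖ ^ 2 / ‖q i‖ ^ 2 ≤ L := by
  classical
  set T : E →ₗ[ℂ] E := (Φ.toLinearEquiv : E →ₗ[ℂ] E) with hT
  have hTapp : ∀ x : E, T x = Φ x := fun x => rfl
  set K : Submodule ℂ E := LinearMap.ker (T - 1) with hKdef
  have memK : ∀ x : E, x ∈ K ↔ Φ x = x := by
    intro x
    simp [hKdef, LinearMap.mem_ker, LinearMap.sub_apply, sub_eq_zero, hTapp]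
  have hqK : ∀ i, q i ∈ K := fun i => (memK _).2 (hfix i)
  have hinner_symm : ∀ x y : E, ⟪Φ x, y⟫ = ⟪x, Φ.symm y⟫ := by
    intro x y
    conv_lhs => rw [← Φ.apply_symm_apply y]
    rw [Φ.inner_map_map]
  have hrange : Kᗮ ≤ LinearMap.range (T - 1) := by
    have h1 : (LinearMap.range (T - 1))ᗮ ≤ K := by
      intro x hx
      rw [memK]
      have hfx : ∀ y : E, ⟪Φ y, x⟫ = ⟪y, x⟫ := by
        intro y
        have h0 : ⟪T y - y, x⟫ = 0 := by
          have := hx ((T - 1) y) (LinearMap.mem_range_self _ y)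
          simpa [LinearMap.sub_apply, inner_sub_left] using this
        have h2 := inner_sub_left (𝕜 := ℂ) (T y) y x
        rw [h0] at h2
        have h3 : ⟪T y, x⟫ = ⟪y, x⟫ := by linear_combination -h2
        simpa [hTapp] using h3
      have hs : Φ.symm x = x := by
        apply ext_inner_left ℂ
        intro y
        rw [← hinner_symm, hfx]
      calc Φ x = Φ (Φ.symm x) := by rw [hs]
        _ = x := Φ.apply_symm_apply x
    calc Kᗮ ≤ (LinearMap.range (T - 1))ᗮᗮ := Submodule.orthogonal_le h1
      _ = LinearMap.range (T - 1) := Submodule.orthogonal_orthogonal _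
  set v₀ : E := (K.orthogonalProjection v : E) with hv₀
  have hv₀K : v₀ ∈ K := (K.orthogonalProjection v).2
  have hwmem : v - v₀ ∈ Kᗮ := K.sub_starProjection_mem_orthogonal v
  obtain ⟨g, hg⟩ := hrange hwmem
  have hgw : T g - g = v - v₀ := by simpa [LinearMap.sub_apply] using hg
  have hΦv₀ : T v₀ = v₀ := by
    have := (memK v₀).1 hv₀K; simpa [hTapp] using this
  have hTv₀ : ∀ τ : ℕ, (T ^ τ) v₀ = v₀ := by
    intro τ
    induction τ with
    | zero => simp
    | succ n ih => rw [pow_succ', Module.End.mul_apply, ih, hΦv₀]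
  have hnormT : ∀ (τ : ℕ) (x : E), ‖(T ^ τ) x‖ = ‖x‖ := by
    intro τ x
    induction τ with
    | zero => simp
    | succ n ih =>
      rw [pow_succ', Module.End.mul_apply]
      have : ‖T ((T ^ n) x)‖ = ‖(T ^ n) x‖ := by rw [hTapp]; exact Φ.norm_map _
      rw [this, ih]
  set c : ℝ := (⟪v, v₀⟫).re with hc
  set r : ℕ → ℝ := fun τ => (⟪v, (T ^ τ) g⟫).re with hr
  have hterm : ∀ τ : ℕ, (⟪v, (T ^ τ) v⟫).re = c + (r (τ + 1) - r τ) := by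
    intro τ
    have hdec : (T ^ τ) v = v₀ + ((T ^ (τ + 1)) g - (T ^ τ) g) := by
      have : v = v₀ + (T g - g) := by rw [hgw]; abel
      rw [this, map_add, map_sub, hTv₀]
      have : (T ^ τ) (T g) = (T ^ (τ + 1)) g := by
        rw [pow_succ, Module.End.mul_apply]
      rw [this]
    rw [hdec, inner_add_right, inner_sub_right]
    simp only [Complex.add_re, Complex.sub_re, hc, hr]
  have hsum : ∀ t : ℕ, ∑ τ ∈ Finset.Icc 1 t, (⟪v, (T ^ τ) v⟫).re
      = t * c + (r (t + 1) - r 1) := by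
    intro t
    simp_rw [hterm]
    rw [Finset.sum_add_distrib, Finset.sum_const, Nat.card_Icc]
    have htel : ∑ τ ∈ Finset.Icc 1 t, (r (τ + 1) - r τ) = r (t + 1) - r 1 := by
      rw [← Finset.Ico_add_one_right_eq_Icc, Finset.sum_Ico_eq_sum_range]
      try simp only [Nat.add_sub_cancel]
      have := Finset.sum_range_sub (fun i => r (1 + i)) t
      simp only [show ∀ i, 1 + (i + 1) = 1 + i + 1 from fun i => by ring] at *
      convert this using 2 <;> ring_nf
    rw [htel]
    simp [nsmul_eq_mul]
  have hrb : ∀ τ : ℕ, |r τ| ≤ ‖v‖ * ‖g‖ := by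
    intro τ
    have h1 : |r τ| ≤ ‖⟪v, (T ^ τ) g⟫‖ := Complex.abs_re_le_norm _
    have h2 : ‖⟪v, (T ^ τ) g⟫‖ ≤ ‖v‖ * ‖(T ^ τ) g‖ := norm_inner_le_norm _ _
    rw [hnormT] at h2
    linarith
  refine ⟨c, ?_, ?_⟩
  · -- limit
    have hb : Tendsto (fun t : ℕ => (1 / (t : ℝ)) * (r (t + 1) - r 1)) atTop (nhds 0) := by
      refine squeeze_zero_norm (a := fun t : ℕ => (2 * (‖v‖ * ‖g‖)) * (1 / (t : ℝ))) ?_ ?_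
      · intro t
        rw [norm_mul]
        have h1 : ‖r (t + 1) - r 1‖ ≤ 2 * (‖v‖ * ‖g‖) := by
          have := hrb (t + 1); have := hrb 1
          rw [Real.norm_eq_abs]
          have := abs_sub (r (t + 1)) (r 1)
          calc |r (t+1) - r 1| ≤ |r (t+1)| + |r 1| := abs_sub _ _
            _ ≤ 2 * (‖v‖ * ‖g‖) := by linarith [hrb (t+1), hrb 1]
        have h2 : ‖(1 / (t : ℝ))‖ = 1 / (t : ℝ) := by
          rw [Real.norm_eq_abs, abs_of_nonneg]; positivity
        rw [h2]
        calc (1 / (t:ℝ)) * ‖r (t + 1) - r 1‖ ≤ (1 / (t:ℝ)) * (2 * (‖v‖ * ‖g‖)) := by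
              apply mul_le_mul_of_nonneg_left h1; positivity
          _ = _ := by ring
      · simpa using (tendsto_one_div_atTop_nhds_zero_nat).const_mul (2 * (‖v‖ * ‖g‖))
    have heq : ∀ᶠ t : ℕ in atTop,
        c + (1 / (t : ℝ)) * (r (t + 1) - r 1)
          = (1 / (t : ℝ)) * ∑ τ ∈ Finset.Icc 1 t, (⟪v, (T ^ τ) v⟫).re := by
      filter_upwards [eventually_ge_atTop 1] with t ht
      rw [hsum t]
      have htne : (t : ℝ) ≠ 0 := Nat.cast_ne_zero.2 (by omega)
      field_simp
    have hfin : Tendsto (fun t : ℕ => c + (1 / (t : ℝ)) * (r (t + 1) - r 1)) atTop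
        (nhds (c + 0)) := tendsto_const_nhds.add hb
    rw [add_zero] at hfin
    exact Tendsto.congr' heq hfin
  · -- Bessel
    have hvq : ∀ i, ⟪v, q i⟫ = ⟪v₀, q i⟫ := by
      intro i
      have h0 : ⟪q i, v - v₀⟫ = 0 := Submodule.inner_right_of_mem_orthogonal (hqK i) hwmem
      have h1 : ⟪v - v₀, q i⟫ = 0 := by
        rw [← inner_conj_symm, h0, map_zero]
      have h2 := inner_sub_left (𝕜 := ℂ) v v₀ (q i)
      rw [h1] at h2
      linear_combination -h2
    have hcv : c = ‖v₀‖ ^ 2 := by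
      have h1 : ⟪v, v₀⟫ = ⟪v₀, v₀⟫ := by
        have h0' : ⟪v₀, v - v₀⟫ = 0 := Submodule.inner_right_of_mem_orthogonal hv₀K hwmem
        have h1' : ⟪v - v₀, v₀⟫ = 0 := by rw [← inner_conj_symm, h0', map_zero]
        have h2 := inner_sub_left (𝕜 := ℂ) v v₀ v₀
        rw [h1'] at h2
        linear_combination -h2
      rw [hc, h1, inner_self_eq_norm_sq_to_K]
      simp [← Complex.ofReal_pow]
    set e : Fin k → E := fun i => ((‖q i‖ : ℂ))⁻¹ • q i with he
    have hqnorm : ∀ i, ‖q i‖ ≠ 0 := fun i => norm_ne_zero_iff.2 (hnz i)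
    have hON : Orthonormal ℂ e := by
      rw [orthonormal_iff_ite]
      intro i j
      rw [he]
      simp only [inner_smul_left, inner_smul_right, map_inv₀, Complex.conj_ofReal]
      by_cases hij : i = j
      · subst hij
        rw [inner_self_eq_norm_sq_to_K, if_pos rfl]
        have : (‖q i‖ : ℂ) ≠ 0 := by exact_mod_cast hqnorm i
        field_simp
        rfl
      · rw [horth i j hij, if_neg hij]
        ring
    have hB := hON.sum_inner_products_le v₀ (s := Finset.univ)
    have hterm2 : ∀ i, ‖⟪v, q i⟫‖ ^ 2 / ‖q i‖ ^ 2 = ‖⟪e i, v₀⟫‖ ^ 2 := by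
      intro i
      rw [he]
      simp only [inner_smul_left, map_inv₀, Complex.conj_ofReal, norm_mul]
      rw [norm_inv, Complex.norm_real, Real.norm_eq_abs, abs_of_nonneg (norm_nonneg _)]
      have habs : ‖⟪q i, v₀⟫‖ = ‖⟪v, q i⟫‖ := by
        rw [hvq i]; exact norm_inner_symm _ _
      rw [habs, mul_pow, div_eq_mul_inv, ← inv_pow]
      ring
    rw [hcv]
    calc ∑ i, ‖⟪v, q i⟫‖ ^ 2 / ‖q i‖ ^ 2 = ∑ i, ‖⟪e i, v₀⟫‖ ^ 2 := by
          exact Finset.sum_congr rfl fun i _ => hterm2 i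
      _ ≤ ‖v₀‖ ^ 2 := hB
/-- embedding of matrices into Euclidean space -/
noncomputable def matEmb (d : ℕ) : Matrix (Fin d) (Fin d) ℂ ≃ₗ[ℂ] EuclideanSpace ℂ (Fin d × Fin d) where
  toFun A := WithLp.toLp 2 (fun p : Fin d × Fin d => A p.1 p.2)
  invFun x := Matrix.of fun i j => x (i, j)
  map_add' A B := rfl
  map_smul' c A := rfl
  left_inv A := rfl
  right_inv x := rfl

lemma matEmb_apply (d : ℕ) (A : Matrix (Fin d) (Fin d) ℂ) (p : Fin d × Fin d) :
    matEmb d A p = A p.1 p.2 := rfl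

lemma matEmb_symm_apply (d : ℕ) (x : EuclideanSpace ℂ (Fin d × Fin d)) (i j : Fin d) :
    (matEmb d).symm x i j = x (i, j) := rfl

lemma matEmb_inner (d : ℕ) (A B : Matrix (Fin d) (Fin d) ℂ) :
    (inner ℂ (matEmb d A) (matEmb d B) : ℂ) = Matrix.trace (Aᴴ * B) := by
  simp only [PiLp.inner_apply, RCLike.inner_apply, matEmb_apply]
  rw [Matrix.trace]
  simp only [Matrix.diag_apply, Matrix.mul_apply, Matrix.conjTranspose_apply]
  rw [Fintype.sum_prod_type]
  rw [Finset.sum_comm]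
  simp [RCLike.star_def, mul_comm]

section conj
variable {d : ℕ} (U : Matrix (Fin d) (Fin d) ℂ)

lemma conj_inv_lemma (hU' : U * Uᴴ = 1) (A : Matrix (Fin d) (Fin d) ℂ) :
    U * (Uᴴ * A * U) * Uᴴ = A := by
  simp only [← Matrix.mul_assoc]
  rw [hU', Matrix.one_mul, Matrix.mul_assoc, hU', Matrix.mul_one]

lemma conj_inv_lemma' (hU : Uᴴ * U = 1) (A : Matrix (Fin d) (Fin d) ℂ) :
    Uᴴ * (U * A * Uᴴ) * U = A := by
  simp only [← Matrix.mul_assoc]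
  rw [hU, Matrix.one_mul, Matrix.mul_assoc, hU, Matrix.mul_one]

/-- conjugation by a unitary, as a linear equivalence of Euclidean space -/
noncomputable def conjEquiv (hU : Uᴴ * U = 1) :
    EuclideanSpace ℂ (Fin d × Fin d) ≃ₗ[ℂ] EuclideanSpace ℂ (Fin d × Fin d) where
  toFun x := matEmb d (Uᴴ * ((matEmb d).symm x) * U)
  invFun x := matEmb d (U * ((matEmb d).symm x) * Uᴴ)
  map_add' x y := by
    simp [map_add, Matrix.mul_add, Matrix.add_mul]
  map_smul' c x := by
    simp [_root_.map_smul, Matrix.mul_smul, Matrix.smul_mul]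
  left_inv x := by
    simp only [LinearEquiv.symm_apply_apply]
    rw [conj_inv_lemma U (mul_eq_one_comm.mp hU)]
    simp
  right_inv x := by
    simp only [LinearEquiv.symm_apply_apply]
    rw [conj_inv_lemma' U hU]
    simp

lemma conjEquiv_inner (hU : Uᴴ * U = 1) (x y : EuclideanSpace ℂ (Fin d × Fin d)) :
    (inner ℂ (conjEquiv U hU x) (conjEquiv U hU y) : ℂ) = inner ℂ x y := by
  have hU' : U * Uᴴ = 1 := mul_eq_one_comm.mp hU
  set A := (matEmb d).symm x with hA
  set B := (matEmb d).symm y with hB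
  have hx : x = matEmb d A := by rw [hA, LinearEquiv.apply_symm_apply]
  have hy : y = matEmb d B := by rw [hB, LinearEquiv.apply_symm_apply]
  have h1 : (conjEquiv U hU) x = matEmb d (Uᴴ * A * U) := rfl
  have h2 : (conjEquiv U hU) y = matEmb d (Uᴴ * B * U) := rfl
  rw [h1, h2, hx, hy, matEmb_inner, matEmb_inner]
  have hct : (Uᴴ * A * U)ᴴ = Uᴴ * Aᴴ * U := by
    simp [Matrix.conjTranspose_mul, Matrix.mul_assoc]
  rw [hct]
  have : Uᴴ * Aᴴ * U * (Uᴴ * B * U) = Uᴴ * (Aᴴ * B) * U := by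
    simp only [← Matrix.mul_assoc]
    rw [Matrix.mul_assoc (Uᴴ * Aᴴ) U Uᴴ, hU', Matrix.mul_one]
  rw [this, Matrix.trace_mul_cycle, ← Matrix.mul_assoc, hU', Matrix.one_mul]

/-- conjugation as a linear isometry equivalence -/
noncomputable def conjIso (hU : Uᴴ * U = 1) :
    EuclideanSpace ℂ (Fin d × Fin d) ≃ₗᵢ[ℂ] EuclideanSpace ℂ (Fin d × Fin d) :=
  (conjEquiv U hU).isometryOfInner (conjEquiv_inner U hU)

lemma conjIso_apply_emb (hU : Uᴴ * U = 1) (A : Matrix (Fin d) (Fin d) ℂ) :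
    conjIso U hU (matEmb d A) = matEmb d (Uᴴ * A * U) := by
  rw [conjIso, LinearEquiv.coe_isometryOfInner]
  show matEmb d (Uᴴ * ((matEmb d).symm (matEmb d A)) * U) = _
  rw [LinearEquiv.symm_apply_apply]

lemma conjIso_pow (hU : Uᴴ * U = 1) (A : Matrix (Fin d) (Fin d) ℂ) (τ : ℕ) :
    (((conjIso U hU).toLinearEquiv :
        EuclideanSpace ℂ (Fin d × Fin d) →ₗ[ℂ] EuclideanSpace ℂ (Fin d × Fin d)) ^ τ)
      (matEmb d A) = matEmb d ((Uᴴ) ^ τ * A * U ^ τ) := by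
  induction τ with
  | zero => simp
  | succ n ih =>
    rw [pow_succ', Module.End.mul_apply, ih]
    have h1 : ((conjIso U hU).toLinearEquiv :
        EuclideanSpace ℂ (Fin d × Fin d) →ₗ[ℂ] EuclideanSpace ℂ (Fin d × Fin d))
        (matEmb d ((Uᴴ) ^ n * A * U ^ n)) = conjIso U hU (matEmb d ((Uᴴ) ^ n * A * U ^ n)) := rfl
    rw [h1, conjIso_apply_emb]
    congr 1
    rw [pow_succ' Uᴴ n, pow_succ U n]
    simp only [← Matrix.mul_assoc]
end conj


/-- For a unitary `U`, an operator `J`, and mutually orthogonal nonzero conserved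
quantities `Qᵢ` (i.e. `U†QᵢU = Qᵢ`), the Cesàro limit of the autocorrelation
`⟨J, U^{−τ} J U^{τ}⟩` exists and is bounded below by `Σᵢ |⟨J,Qᵢ⟩|²/⟨Qᵢ,Qᵢ⟩`. -/
theorem mazur_bound_time_average (d k : ℕ) (hd : 0 < d)
    (U J : Matrix (Fin d) (Fin d) ℂ) (hU : Uᴴ * U = 1)
    (Q : Fin k → Matrix (Fin d) (Fin d) ℂ)
    (hcons : ∀ i, Uᴴ * Q i * U = Q i)
    (hnz : ∀ i, Q i ≠ 0)
    (horth : ∀ i j, i ≠ j → hsInner d (Q i) (Q j) = 0) :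
    ∃ L : ℝ,
      Tendsto (fun t : ℕ =>
          (1 / (t : ℝ)) * ∑ τ ∈ Finset.Icc 1 t,
            (hsInner d J ((Uᴴ) ^ τ * J * U ^ τ)).re)
        atTop (nhds L)
      ∧ ∑ i, ‖hsInner d J (Q i)‖ ^ 2 / (hsInner d (Q i) (Q i)).re ≤ L := by
  classical
  have hdR : (0 : ℝ) < d := by exact_mod_cast hd
  have hdne : (d : ℝ) ≠ 0 := ne_of_gt hdR
  have hdneC : (d : ℂ) ≠ 0 := by exact_mod_cast hdne
  set Φ := conjIso U hU with hΦ
  set v : EuclideanSpace ℂ (Fin d × Fin d) := matEmb d J with hv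
  set q : Fin k → EuclideanSpace ℂ (Fin d × Fin d) := fun i => matEmb d (Q i) with hq
  have hfix : ∀ i, Φ (q i) = q i := by
    intro i
    rw [hΦ, hq]
    show conjIso U hU (matEmb d (Q i)) = matEmb d (Q i)
    rw [conjIso_apply_emb, hcons i]
  have hnz' : ∀ i, q i ≠ 0 := by
    intro i h
    exact hnz i ((matEmb d).map_eq_zero_iff.mp h)
  have horth' : ∀ i j, i ≠ j → (inner ℂ (q i) (q j) : ℂ) = 0 := by
    intro i j hij
    have h0 := horth i j hij
    rw [hsInner, div_eq_zero_iff] at h0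
    rcases h0 with h0 | h0
    · rw [hq]
      show (inner ℂ (matEmb d (Q i)) (matEmb d (Q j)) : ℂ) = 0
      rw [matEmb_inner, h0]
    · exact absurd h0 hdneC
  obtain ⟨L₀, hTend, hBes⟩ := mazur_abstract Φ v q hfix hnz' horth'
  have hkey : ∀ A B : Matrix (Fin d) (Fin d) ℂ,
      hsInner d A B = (inner ℂ (matEmb d A) (matEmb d B) : ℂ) / d := by
    intro A B
    rw [hsInner, matEmb_inner]
  refine ⟨L₀ / d, ?_, ?_⟩
  · have hfun : (fun t : ℕ =>
        (1 / (t : ℝ)) * ∑ τ ∈ Finset.Icc 1 t,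
          (hsInner d J ((Uᴴ) ^ τ * J * U ^ τ)).re)
        = fun t : ℕ => ((1 / (t : ℝ)) * ∑ τ ∈ Finset.Icc 1 t,
            ((inner ℂ v (((Φ.toLinearEquiv :
              EuclideanSpace ℂ (Fin d × Fin d) →ₗ[ℂ]
                EuclideanSpace ℂ (Fin d × Fin d)) ^ τ) v) : ℂ)).re) / d := by
      funext t
      rw [mul_div_assoc]
      congr 1
      rw [Finset.sum_div]
      apply Finset.sum_congr rfl
      intro τ _
      rw [hkey, hΦ, hv, conjIso_pow U hU J τ]
      rw [Complex.div_natCast_re]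
    rw [hfun]
    exact hTend.div_const d
  · have hterm : ∀ i, ‖hsInner d J (Q i)‖ ^ 2 / (hsInner d (Q i) (Q i)).re
        = (‖(inner ℂ v (q i) : ℂ)‖ ^ 2 / ‖q i‖ ^ 2) / d := by
      intro i
      have h1 : hsInner d J (Q i) = (inner ℂ v (q i) : ℂ) / d := hkey J (Q i)
      have h2 : (hsInner d (Q i) (Q i)).re = ‖q i‖ ^ 2 / d := by
        rw [hkey, hq]
        show ((inner ℂ (matEmb d (Q i)) (matEmb d (Q i)) : ℂ) / d).re = _
        rw [inner_self_eq_norm_sq_to_K, Complex.div_natCast_re]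
        norm_cast
      rw [h1, h2, norm_div, Complex.norm_natCast]
      have hqn : ‖q i‖ ≠ 0 := norm_ne_zero_iff.2 (hnz' i)
      field_simp
    calc ∑ i, ‖hsInner d J (Q i)‖ ^ 2 / (hsInner d (Q i) (Q i)).re
        = (∑ i, ‖(inner ℂ v (q i) : ℂ)‖ ^ 2 / ‖q i‖ ^ 2) / d := by
          rw [Finset.sum_div]; exact Finset.sum_congr rfl fun i _ => hterm i
      _ ≤ L₀ / d := by
          exact div_le_div_of_nonneg_right hBes hdR.le
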